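/- Let F have characteristic zero and let R be a linear operator on F[x,y] satisfying R(xⁿyᵐ) = α_{n,m} xⁿyᵐ for scalars α_{n,m} (n, m ≥ 0). If R is a Rota–Baxter operator of weight zero, then R = 0, i.e. α_{n,m} = 0 for all n, m. -/
import Mathlib


open MvPolynomial

/-- A Rota–Baxter operator of weight zero on `F[x,y]`
(char F = 0) that is diagonal on the monomial basis is zero. -/
theorem stmt18 {F : Type*} [Field F] [CharZero F]
    (R : MvPolynomial (Fin 2) F →ₗ[F] MvPolynomial (Fin 2) F)
    (α : ℕ → ℕ → F)
    (hdiag : ∀ n m : ℕ, R (X 0 ^ n * X 1 ^ m) = α n m • (X 0 ^ n * X 1 ^ m))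
    (hRB : ∀ f g : MvPolynomial (Fin 2) F, R f * R g = R (R f * g + f * R g)) :
    ∀ n m : ℕ, α n m = 0 := by
  have h1 : R 1 = α 0 0 • (1 : MvPolynomial (Fin 2) F) := by
    simpa using hdiag 0 0
  have h00 : α 0 0 = 0 := by
    have h := hRB 1 1
    rw [h1] at h
    rw [smul_mul_smul_comm, one_mul, mul_one, one_mul, ← add_smul, map_smul, h1, smul_smul] at h
    have h' : α 0 0 * α 0 0 = (α 0 0 + α 0 0) * α 0 0 := by
      have := smul_left_injective F (one_ne_zero :
        (1 : MvPolynomial (Fin 2) F) ≠ 0) h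
      exact this
    have hsq : α 0 0 * α 0 0 = 0 := by linear_combination -h'
    exact mul_self_eq_zero.mp hsq
  intro n m
  have hR1 : R 1 = 0 := by rw [h1, h00, zero_smul]
  have h := hRB 1 (X 0 ^ n * X 1 ^ m)
  rw [hR1, zero_mul, zero_mul, zero_add, one_mul, hdiag, map_smul, hdiag,
    smul_smul] at h
  have hmono : (X 0 ^ n * X 1 ^ m : MvPolynomial (Fin 2) F) ≠ 0 :=
    mul_ne_zero (pow_ne_zero _ (X_ne_zero _)) (pow_ne_zero _ (X_ne_zero _))
  have : α n m * α n m = 0 := by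
    rcases smul_eq_zero.mp h.symm with h' | h'
    · exact h'
    · exact absurd h' hmono
  exact mul_self_eq_zero.mp this
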